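/- arXiv:1806.05657 — 3 statements merged into one kernel-verified Lean document; each statement's English description precedes it below -/
import Mathlib

section
/- Let G be a finite connected graph in which every vertex has even degree, and let r be a vertex. Then there exists a trail starting at r that ends at r without using all edges of G (i.e., the player can 'get stuck' at r before covering all edges) if and only if the graph G with vertex r deleted contains a cycle. -/
open SimpleGraph Walk

set_option linter.unusedSectionVars false

variable {V : Type} [Fintype V] [DecidableEq V]

private def delE (G : SimpleGraph V) (l : List (Sym2 V)) : SimpleGraph V :=
  G.deleteEdges {e | e ∈ l}

private lemma delE_adj {G : SimpleGraph V} {l : List (Sym2 V)} {u v : V} :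
    (delE G l).Adj u v ↔ G.Adj u v ∧ s(u, v) ∉ l := by
  simp [delE, SimpleGraph.deleteEdges_adj]

private instance {G : SimpleGraph V} [DecidableRel G.Adj] {l : List (Sym2 V)} :
    DecidableRel (delE G l).Adj := fun _ _ => decidable_of_iff _ delE_adj.symm

private lemma delE_le {G : SimpleGraph V} {l : List (Sym2 V)} : delE G l ≤ G :=
  SimpleGraph.deleteEdges_le _

private lemma delE_edgeSet {G : SimpleGraph V} {l : List (Sym2 V)} {e : Sym2 V} :
    e ∈ (delE G l).edgeSet ↔ e ∈ G.edgeSet ∧ e ∉ l := by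
  rw [delE, SimpleGraph.edgeSet_deleteEdges]
  rfl

private def subG (H : SimpleGraph V) (r : V) : SimpleGraph {v : V // v ≠ r} :=
  H.comap Subtype.val

private lemma subG_adj {H : SimpleGraph V} {r : V} {x y : {v : V // v ≠ r}} :
    (subG H r).Adj x y ↔ H.Adj x.1 y.1 := Iff.rfl

private instance {H : SimpleGraph V} [DecidableRel H.Adj] {r : V} :
    DecidableRel (subG H r).Adj := fun x y =>
  inferInstanceAs (Decidable (H.Adj x.1 y.1))

private lemma even_countP_of_closed {G : SimpleGraph V} {r : V} {w : G.Walk r r}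
    (hw : w.IsTrail) (v : V) : Even (w.edges.countP fun e => v ∈ e) :=
  (hw.even_countP_edges_iff v).mpr (fun h => absurd rfl h)

private lemma degree_delE (G : SimpleGraph V) [DecidableRel G.Adj]
    (l : List (Sym2 V)) (hnd : l.Nodup) (hsub : ∀ e ∈ l, e ∈ G.edgeSet) (v : V) :
    (delE G l).degree v + l.countP (fun e => v ∈ e) = G.degree v := by
  have h1 : (delE G l).neighborFinset v
      = (G.neighborFinset v).filter (fun y => ¬ s(v, y) ∈ l) := by
    ext y
    simp [SimpleGraph.mem_neighborFinset, delE_adj]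
  have h2 : l.countP (fun e => v ∈ e)
      = ((G.neighborFinset v).filter (fun y => s(v, y) ∈ l)).card := by
    rw [List.countP_eq_length_filter,
      ← List.toFinset_card_of_nodup (hnd.filter _)]
    refine (Finset.card_nbij (fun y => s(v, y)) ?_ ?_ ?_).symm
    · intro y hy
      simp only [Finset.mem_coe, Finset.mem_filter, SimpleGraph.mem_neighborFinset] at hy
      simp [List.mem_filter, hy.2]
    · intro y hy z hz h
      exact Sym2.congr_right.mp h
    · intro e he
      simp only [Finset.coe_sort_coe, List.coe_toFinset, Set.mem_setOf_eq, List.mem_filter,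
        decide_eq_true_eq] at he
      obtain ⟨hel, hev⟩ := he
      obtain ⟨y, rfl⟩ := Sym2.mem_iff_exists.mp hev
      refine ⟨y, ?_, rfl⟩
      simp only [Finset.coe_filter, Set.mem_setOf_eq, SimpleGraph.mem_neighborFinset]
      exact ⟨(G.mem_edgeSet).mp (hsub _ hel), hel⟩
  rw [SimpleGraph.degree, SimpleGraph.degree, h1, h2, Nat.add_comm]
  exact Finset.card_filter_add_card_filter_not _

/-- In a graph with all even degrees, there is a closed trail at `r`
using all edges incident to `r`. -/
private lemma exists_stuck_trail (H : SimpleGraph V) [DecidableRel H.Adj]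
    (heven : ∀ v, Even (H.degree v)) (r : V) :
    ∃ w : H.Walk r r, w.IsTrail ∧ ∀ e ∈ H.edgeSet, r ∈ e → e ∈ w.edges := by
  classical
  set B := Fintype.card (Sym2 V) with hB
  set P : ℕ → Prop := fun n => ∃ v, ∃ p : H.Walk r v, p.IsTrail ∧ p.length = n with hPdef
  have hbdd : ∀ n, P n → n ≤ B := by
    rintro n ⟨v, p, hp, rfl⟩
    rw [← p.length_edges]
    exact hp.edges_nodup.length_le_card
  have hP0 : P 0 := ⟨r, .nil, by simp, rfl⟩
  set S : Finset ℕ := (Finset.range (B + 1)).filter P with hS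
  have hS0 : 0 ∈ S := by
    simp only [hS, Finset.mem_filter, Finset.mem_range]
    exact ⟨Nat.succ_pos _, hP0⟩
  have hmaxmem : P (S.max' ⟨0, hS0⟩) := (Finset.mem_filter.mp (S.max'_mem _)).2
  obtain ⟨v, p, hp, hlen⟩ := hmaxmem
  have hmax : ∀ n, P n → n ≤ S.max' ⟨0, hS0⟩ := fun n hn =>
    S.le_max' n (Finset.mem_filter.mpr
      ⟨Finset.mem_range.mpr (Nat.lt_succ_of_le (hbdd n hn)), hn⟩)
  have hnoext : ∀ b, H.Adj v b → s(v, b) ∈ p.edges := by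
    intro b hb
    by_contra hnb
    have hq : P (p.length + 1) := by
      refine ⟨b, (Walk.cons hb.symm p.reverse).reverse, ?_, by simp⟩
      refine Walk.IsTrail.reverse _ ?_
      rw [Walk.isTrail_cons]
      refine ⟨hp.reverse _, ?_⟩
      rw [Walk.edges_reverse, List.mem_reverse, Sym2.eq_swap]
      exact hnb
    have := hmax _ hq
    omega
  have hall : p.edges.countP (fun e => v ∈ e) = H.degree v := by
    rw [List.countP_eq_length_filter,
      ← List.toFinset_card_of_nodup (hp.edges_nodup.filter _),
      ← H.card_incidenceFinset_eq_degree]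
    congr 1
    ext e
    simp only [List.mem_toFinset, List.mem_filter, decide_eq_true_eq,
      SimpleGraph.mem_incidenceFinset]
    constructor
    · rintro ⟨he, hv⟩
      exact ⟨p.edges_subset_edgeSet he, hv⟩
    · rintro ⟨he, hv⟩
      obtain ⟨y, rfl⟩ := Sym2.mem_iff_exists.mp hv
      exact ⟨hnoext y ((H.mem_edgeSet).mp he), hv⟩
  have hvr : v = r := by
    by_contra hvr
    have hodd : ¬ Even (p.edges.countP (fun e => v ∈ e)) := by
      rw [hp.even_countP_edges_iff v]
      intro h
      exact (h (Ne.symm hvr)).2 rfl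
    rw [hall] at hodd
    exact hodd (heven v)
  subst hvr
  refine ⟨p, hp, ?_⟩
  intro e he hre
  obtain ⟨y, rfl⟩ := Sym2.mem_iff_exists.mp hre
  exact hnoext y ((H.mem_edgeSet).mp he)

private lemma degree_subG {H : SimpleGraph V} [DecidableRel H.Adj] {r : V}
    (hr : ∀ y, ¬ H.Adj r y) (x : {v : V // v ≠ r}) :
    (subG H r).degree x = H.degree x.1 := by
  refine Finset.card_nbij (fun y => y.1) ?_ ?_ ?_
  · intro y hy
    rw [Finset.mem_coe, SimpleGraph.mem_neighborFinset] at hy ⊢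
    exact hy
  · intro y _ z _ h
    exact Subtype.ext h
  · intro z hz
    simp only [Finset.coe_sort_coe, Finset.mem_coe, SimpleGraph.mem_neighborFinset] at hz
    have hzr : z ≠ r := by
      rintro rfl
      exact hr x.1 hz.symm
    refine ⟨⟨z, hzr⟩, ?_, rfl⟩
    simp only [Finset.mem_coe, SimpleGraph.mem_neighborFinset]
    exact hz

/-- In a finite connected Eulerian graph, there is a closed trail at `r` that uses all
edges incident to `r` but not all edges of `G` (the player can "get stuck" at `r`)
iff `G` minus the vertex `r` contains a cycle. -/
theorem stmt_3 {V : Type} [Fintype V] [DecidableEq V] (G : SimpleGraph V)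
    [DecidableRel G.Adj] (hG : G.Connected) (heven : ∀ v : V, Even (G.degree v))
    (r : V) :
    (∃ w : G.Walk r r, w.IsTrail ∧ (∃ e ∈ G.edgeSet, e ∉ w.edges) ∧
      (∀ e ∈ G.edgeSet, r ∈ e → e ∈ w.edges)) ↔
    ¬ (G.induce {v : V | v ≠ r}).IsAcyclic := by
  classical
  constructor
  · rintro ⟨w, hw, ⟨e₀, he₀G, he₀w⟩, hall⟩ hacyc
    have hre₀ : r ∉ e₀ := fun h => he₀w (hall e₀ he₀G h)
    revert he₀G he₀w hre₀
    induction e₀ using Sym2.ind with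
    | _ a b =>
    intro he₀G he₀w hre₀
    have ha : a ≠ r := fun h => hre₀ (by rw [h]; exact Sym2.mem_mk_left _ _)
    have hb : b ≠ r := fun h => hre₀ (by rw [h]; exact Sym2.mem_mk_right _ _)
    have hHr : ∀ y, ¬ (delE G w.edges).Adj r y := by
      intro y hy
      rw [delE_adj] at hy
      exact hy.2 (hall _ ((G.mem_edgeSet).mpr hy.1) (Sym2.mem_mk_left _ _))
    have hHeven : ∀ v, Even ((delE G w.edges).degree v) := by
      intro v
      have hsum := degree_delE G w.edges hw.edges_nodup
        (fun e he => w.edges_subset_edgeSet he) v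
      have hev2 := even_countP_of_closed hw v
      have hev3 := heven v
      rw [← hsum, Nat.even_add] at hev3
      exact hev3.mpr hev2
    have hKeven : ∀ x, Even ((subG (delE G w.edges) r).degree x) := by
      intro x
      rw [degree_subG hHr x]
      exact hHeven x.1
    have hKab : (subG (delE G w.edges) r).Adj ⟨a, ha⟩ ⟨b, hb⟩ := by
      rw [subG_adj, delE_adj]
      exact ⟨(G.mem_edgeSet).mp he₀G, he₀w⟩
    obtain ⟨c, hc, hcall⟩ := exists_stuck_trail (subG (delE G w.edges) r) hKeven ⟨a, ha⟩
    have hedge : s((⟨a, ha⟩ : {v : V // v ≠ r}), ⟨b, hb⟩) ∈ c.edges :=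
      hcall _ (((subG (delE G w.edges) r).mem_edgeSet).mpr hKab) (Sym2.mem_mk_left _ _)
    have hle : subG (delE G w.edges) r ≤ G.induce {v : V | v ≠ r} := by
      intro x y hxy
      rw [subG_adj, delE_adj] at hxy
      exact hxy.1
    have hKacyc : (subG (delE G w.edges) r).IsAcyclic :=
      fun u cyc hcyc => hacyc _ (hcyc.mapLe hle)
    have hpu := SimpleGraph.isAcyclic_iff_path_unique.mp hKacyc
    cases c with
    | nil => simp at hedge
    | @cons _ x _ h' q =>
      rw [Walk.isTrail_cons] at hc
      obtain ⟨hq, hne⟩ := hc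
      have hpq := hpu q.toPath (SimpleGraph.Path.singleton h'.symm)
      have hmem : s(x, (⟨a, ha⟩ : {v : V // v ≠ r})) ∈ q.toPath.1.edges := by
        rw [hpq]
        simp [SimpleGraph.Path.singleton]
      have hmem' := q.edges_toPath_subset hmem
      rw [Sym2.eq_swap] at hmem'
      exact hne hmem'
  · intro hnac
    simp only [SimpleGraph.IsAcyclic, not_forall, not_not] at hnac
    obtain ⟨x, c, hc⟩ := hnac
    have hfinj : Function.Injective
        (Subtype.val : {v : V // v ∈ {v : V | v ≠ r}} → V) := Subtype.val_injective
    let f : G.induce {v : V | v ≠ r} →g G := ⟨Subtype.val, fun {u v} h => h⟩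
    have hc' : (c.map f).IsCycle := (Walk.map_isCycle_iff_of_injective hfinj).mpr hc
    have hr' : ∀ e ∈ (c.map f).edges, r ∉ e := by
      intro e he hre
      rw [Walk.edges_map] at he
      obtain ⟨e₀, he₀, rfl⟩ := List.mem_map.mp he
      obtain ⟨y, hy, hyr⟩ := Sym2.mem_map.mp hre
      exact y.2 hyr
    have hne : (c.map f).edges ≠ [] := by
      intro h
      have h3 := hc'.three_le_length
      rw [← (c.map f).length_edges, h] at h3
      simp at h3
    obtain ⟨e₁, he₁⟩ := List.exists_mem_of_ne_nil _ hne
    have hHeven : ∀ v, Even ((delE G (c.map f).edges).degree v) := by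
      intro v
      have hsum := degree_delE G (c.map f).edges hc'.isTrail.edges_nodup
        (fun e he => (c.map f).edges_subset_edgeSet he) v
      have hev2 := even_countP_of_closed hc'.isTrail v
      have hev3 := heven v
      rw [← hsum, Nat.even_add] at hev3
      exact hev3.mpr hev2
    obtain ⟨w, hwt, hwall⟩ := exists_stuck_trail (delE G (c.map f).edges) hHeven r
    have hsub : ∀ e ∈ w.edges, e ∈ G.edgeSet := fun e he =>
      (delE_edgeSet.mp (w.edges_subset_edgeSet he)).1
    refine ⟨w.transfer G hsub, ⟨?_⟩,
      ⟨e₁, (c.map f).edges_subset_edgeSet he₁, ?_⟩, ?_⟩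
    · rw [Walk.edges_transfer]
      exact hwt.edges_nodup
    · rw [Walk.edges_transfer]
      intro hmem
      exact (delE_edgeSet.mp (w.edges_subset_edgeSet hmem)).2 he₁
    · intro e heG hre
      rw [Walk.edges_transfer]
      exact hwall e (delE_edgeSet.mpr ⟨heG, fun hmem => hr' e hmem hre⟩) hre
end

section
/- If a finite connected graph G has an Eulerian circuit and r is a vertex such that G − r is a forest (contains no cycle), then every maximal trail in G starting at r is an Eulerian circuit (i.e., Red cannot 'get stuck' without capturing all pieces). -/
open SimpleGraph

/-- Push a walk into an induced subgraph when its support lies in the set. -/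
def induceWalk {V : Type} {G : SimpleGraph V} {s : Set V} :
    ∀ {u v : V} (p : G.Walk u v) (h : ∀ x ∈ p.support, x ∈ s),
      (G.induce s).Walk ⟨u, h u p.start_mem_support⟩ ⟨v, h v p.end_mem_support⟩
  | _, _, SimpleGraph.Walk.nil, _ => SimpleGraph.Walk.nil
  | _, _, SimpleGraph.Walk.cons a p, h =>
      SimpleGraph.Walk.cons (by exact a)
        (induceWalk p fun x hx => h x (by simp [hx]))

lemma induceWalk_map {V : Type} {G : SimpleGraph V} {s : Set V} :
    ∀ {u v : V} (p : G.Walk u v) (h : ∀ x ∈ p.support, x ∈ s),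
      (induceWalk p h).map (SimpleGraph.Embedding.induce s).toHom = p
  | _, _, SimpleGraph.Walk.nil, _ => rfl
  | _, _, SimpleGraph.Walk.cons a p, h => by
      simp only [induceWalk, SimpleGraph.Walk.map_cons, induceWalk_map]
      exact congrArg (SimpleGraph.Walk.cons a) (induceWalk_map p _)

lemma cycle_induce {V : Type} {G : SimpleGraph V} {s : Set V} {u : V} (p : G.Walk u u)
    (hp : p.IsCycle) (h : ∀ x ∈ p.support, x ∈ s) : ¬ (G.induce s).IsAcyclic := by
  intro hac
  refine hac (induceWalk p h) ?_
  rw [← SimpleGraph.Walk.map_isCycle_iff_of_injective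
    (f := (SimpleGraph.Embedding.induce s).toHom) Subtype.val_injective]
  rw [induceWalk_map p h]
  exact hp

lemma no_adj_of_acyclic_even {V : Type} [Fintype V] [DecidableEq V]
    (H : SimpleGraph V) [DecidableRel H.Adj] (hac : H.IsAcyclic)
    (he : ∀ v, Even (H.degree v)) {a b : V} (hab : H.Adj a b) : False := by
  have key : ∀ n : ℕ, ∃ (u : V) (p : H.Walk u b), p.IsPath ∧ p.length = n := by
    intro n
    induction n with
    | zero => exact ⟨b, .nil, SimpleGraph.Walk.IsPath.nil, rfl⟩
    | succ n ih =>
      obtain ⟨u, p, hp, hl⟩ := ih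
      cases p with
      | nil =>
        refine ⟨a, .cons hab .nil, ?_, ?_⟩
        · simp [hab.ne]
        · simp at hl ⊢; omega
      | @cons _ c _ h' q =>
        have h2 : 1 < H.degree u := by
          have h1 : 0 < H.degree u := by
            rw [← SimpleGraph.card_neighborFinset_eq_degree]
            exact Finset.card_pos.mpr ⟨c, (SimpleGraph.mem_neighborFinset _ _ _).mpr h'⟩
          obtain ⟨k, hk⟩ := he u
          omega
        rw [← SimpleGraph.card_neighborFinset_eq_degree] at h2
        obtain ⟨x, hxmem, hxc⟩ := Finset.exists_mem_ne h2 c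
        have hxu : H.Adj u x := (SimpleGraph.mem_neighborFinset _ _ _).mp hxmem
        by_cases hxs : x ∈ (SimpleGraph.Walk.cons h' q).support
        · exfalso
          have hq' := hp.takeUntil hxs
          have hnotmem : s(x, u) ∉ ((SimpleGraph.Walk.cons h' q).takeUntil x hxs).edges := by
            intro hmem
            have hmem' := SimpleGraph.Walk.edges_takeUntil_subset _ hxs hmem
            rw [SimpleGraph.Walk.edges_cons, List.mem_cons] at hmem'
            rcases hmem' with heq | hmemq
            · rw [Sym2.eq_iff] at heq
              rcases heq with ⟨h1, h2⟩ | ⟨h1, h2⟩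
              · exact hxu.ne h1.symm
              · exact hxc h1
            · have : u ∈ q.support := SimpleGraph.Walk.snd_mem_support_of_mem_edges q hmemq
              rw [SimpleGraph.Walk.cons_isPath_iff] at hp
              exact hp.2 this
          exact hac _ ((SimpleGraph.Walk.cons_isCycle_iff _ hxu.symm).mpr ⟨hq', hnotmem⟩)
        · refine ⟨x, .cons hxu.symm (.cons h' q), ?_, ?_⟩
          · rw [SimpleGraph.Walk.cons_isPath_iff]; exact ⟨hp, hxs⟩
          · simp at hl ⊢; omega
  obtain ⟨u, p, hp, hl⟩ := key (Fintype.card V)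
  have := hp.length_lt
  omega

/-- If a finite connected graph `G` is Eulerian (all degrees even) and `G − r` is a
forest, then every maximal trail starting at `r` (no unused edge at its final vertex)
is an Eulerian circuit. -/
theorem stmt_14 {V : Type} [Fintype V] [DecidableEq V] (G : SimpleGraph V)
    [DecidableRel G.Adj] (hG : G.Connected) (heven : ∀ v : V, Even (G.degree v))
    (r : V) (hforest : (G.induce {x : V | x ≠ r}).IsAcyclic) :
    ∀ (v : V) (w : G.Walk r v), w.IsTrail →
      (∀ u : V, G.Adj v u → s(v, u) ∈ w.edges) → w.IsEulerian := by
  classical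
  intro v w ht hmax
  have countP_eq : ∀ x : V, w.edges.countP (fun e => x ∈ e) =
      ((ht.edgesFinset).filter (fun e => x ∈ e)).card := by
    intro x
    rw [List.countP_eq_length_filter]
    rfl
  have hvr : v = r := by
    have heq : (ht.edgesFinset).filter (fun e => v ∈ e) = G.incidenceFinset v := by
      ext e
      simp only [Finset.mem_filter, SimpleGraph.mem_incidenceFinset]
      constructor
      · rintro ⟨he, hv⟩
        exact ⟨w.edges_subset_edgeSet he, hv⟩
      · rintro ⟨he, hv⟩
        refine ⟨?_, hv⟩
        induction e with
        | h a b =>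
          have hadj : G.Adj a b := he
          rw [Sym2.mem_iff] at hv
          rcases hv with rfl | rfl
          · exact hmax b hadj
          · rw [Sym2.eq_swap]; exact hmax a hadj.symm
    have hev : Even (w.edges.countP fun e => v ∈ e) := by
      rw [countP_eq, heq, SimpleGraph.card_incidenceFinset_eq_degree]
      exact heven v
    by_contra hne
    exact ((ht.even_countP_edges_iff v).mp hev (Ne.symm hne)).2 rfl
  subst hvr
  have hevenx : ∀ x : V, Even ((ht.edgesFinset.filter (fun e => x ∈ e)).card) := by
    intro x
    rw [← countP_eq]
    exact (ht.even_countP_edges_iff x).mpr (fun h => absurd rfl h)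
  set H := G.deleteEdges {e | e ∈ w.edges} with hHdef
  have hHdeg : ∀ x : V, Even (H.degree x) := by
    intro x
    have hinc : H.incidenceFinset x =
        G.incidenceFinset x \ (ht.edgesFinset.filter (fun e => x ∈ e)) := by
      ext e
      simp only [SimpleGraph.mem_incidenceFinset, Finset.mem_sdiff, Finset.mem_filter,
        Finset.mem_mk, Multiset.mem_coe, SimpleGraph.incidenceSet, Set.mem_sep_iff,
        SimpleGraph.edgeSet_deleteEdges, Set.mem_diff, Set.mem_setOf_eq, hHdef]
      tauto
    have hsub : ht.edgesFinset.filter (fun e => x ∈ e) ⊆ G.incidenceFinset x := by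
      intro e he
      rw [Finset.mem_filter] at he
      rw [SimpleGraph.mem_incidenceFinset]
      exact ⟨w.edges_subset_edgeSet he.1, he.2⟩
    have hdeg : H.degree x = G.degree x - (ht.edgesFinset.filter (fun e => x ∈ e)).card := by
      rw [← SimpleGraph.card_incidenceFinset_eq_degree, ← SimpleGraph.card_incidenceFinset_eq_degree,
        hinc, Finset.card_sdiff_of_subset hsub]
    rw [hdeg]
    exact (heven x).tsub (hevenx x)
  have hHr : ∀ y : V, ¬ H.Adj v y := by
    intro y hy
    rw [hHdef, SimpleGraph.deleteEdges_adj] at hy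
    exact hy.2 (hmax y hy.1)
  have hHac : H.IsAcyclic := by
    intro u c hc
    have hrns : v ∉ c.support := by
      intro hr
      have hc' := hc.rotate hr
      obtain ⟨y, hadj, q, hq⟩ := SimpleGraph.Walk.not_nil_iff.mp hc'.not_nil
      exact hHr y hadj
    have hedges : ∀ e ∈ c.edges, e ∈ G.edgeSet := by
      intro e he
      have := c.edges_subset_edgeSet he
      rw [hHdef, SimpleGraph.edgeSet_deleteEdges] at this
      exact this.1
    have hc' : (c.transfer G hedges).IsCycle := hc.transfer _
    have hsupp : ∀ x ∈ (c.transfer G hedges).support, x ∈ {x : V | x ≠ v} := by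
      rw [SimpleGraph.Walk.support_transfer]
      intro x hx
      simp only [Set.mem_setOf_eq]
      rintro rfl
      exact hrns hx
    exact cycle_induce _ hc' hsupp hforest
  apply ht.isEulerian_of_forall_mem
  intro e he
  by_contra hne
  have heH : e ∈ H.edgeSet := by
    rw [hHdef, SimpleGraph.edgeSet_deleteEdges]
    exact ⟨he, hne⟩
  induction e with
  | h a b =>
    exact no_adj_of_acyclic_even H hHac hHdeg (H.mem_edgeSet.mp heH)
end

section
/- If a finite connected Eulerian graph G has a vertex r such that G − r contains a cycle, then there is a maximal trail starting at r that does not use all edges of G. -/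
open SimpleGraph Walk

/-- If a finite connected Eulerian graph `G` has a vertex `r` with a cycle in `G − r`,
then there is a maximal trail starting at `r` (no unused edge at its final vertex)
that does not use all edges of `G`. -/
theorem stmt_15 {V : Type} [Fintype V] [DecidableEq V] (G : SimpleGraph V)
    [DecidableRel G.Adj] (hG : G.Connected) (heven : ∀ v : V, Even (G.degree v))
    (r : V) (hcyc : ¬ (G.induce {x : V | x ≠ r}).IsAcyclic) :
    ∃ (v : V) (w : G.Walk r v), w.IsTrail ∧
      (∀ u : V, G.Adj v u → s(v, u) ∈ w.edges) ∧
      ∃ e ∈ G.edgeSet, e ∉ w.edges := by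
  classical
  unfold SimpleGraph.IsAcyclic at hcyc
  push_neg at hcyc
  obtain ⟨a0, c0, hc0⟩ := hcyc
  set f := SimpleGraph.Embedding.induce (G := G) {x : V | x ≠ r} with hf
  set c := c0.map f.toHom with hcdef
  have hc : c.IsCycle := hc0.map f.injective
  have hr : r ∉ c.support := by
    rw [hcdef, SimpleGraph.Walk.support_map]
    intro h
    obtain ⟨x, -, hx⟩ := List.mem_map.mp h
    exact x.2 hx
  -- facts about the cycle's edges
  have hFnodup : c.edges.Nodup := hc.isTrail.edges_nodup
  have hFne : c.edges ≠ [] := by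
    have h3 := hc.three_le_length
    have : c.edges.length = c.length := c.length_edges
    intro h
    rw [h] at this
    simp at this
    omega
  have hFe : ∀ e ∈ c.edges, e ∈ G.edgeSet := fun e he => c.edges_subset_edgeSet he
  have hFr : ∀ e ∈ c.edges, r ∉ e := by
    intro e he hre
    induction e with
    | h x y =>
      rcases Sym2.mem_iff.mp hre with rfl | rfl
      · exact hr (c.fst_mem_support_of_mem_edges he)
      · exact hr (c.snd_mem_support_of_mem_edges he)
  have hFeven : ∀ x : V, Even (c.edges.countP fun e => x ∈ e) :=
    fun x => (hc.isTrail.even_countP_edges_iff x).2 (fun h => absurd rfl h)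
  -- maximal-length trail avoiding the cycle's edges
  set P : ℕ → Prop := fun n => ∃ (v : V) (w : G.Walk r v), w.IsTrail ∧
      (∀ e ∈ c.edges, e ∉ w.edges) ∧ w.length = n with hP
  have hP0 : P 0 := ⟨r, .nil, SimpleGraph.Walk.IsTrail.nil, by simp, rfl⟩
  have hbd : ∀ n, P n → n ≤ G.edgeFinset.card := by
    rintro n ⟨v, w, ht, -, rfl⟩
    exact ht.length_le_card_edgeFinset
  set N := Nat.findGreatest P G.edgeFinset.card with hN
  have hPN : P N := Nat.findGreatest_spec (Nat.zero_le _) hP0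
  obtain ⟨v, w, htw, havoid, hlen⟩ := hPN
  have hmax : ∀ u, G.Adj v u → s(v, u) ∉ c.edges → s(v, u) ∈ w.edges := by
    intro u hadj hF
    by_contra hne
    have ht' : (w.concat hadj).IsTrail := by
      rw [SimpleGraph.Walk.isTrail_def, SimpleGraph.Walk.edges_concat,
        List.concat_eq_append, List.nodup_append']
      exact ⟨htw.edges_nodup, List.nodup_singleton _,
        fun e he he' => by simp at he'; subst he'; exact hne he⟩
    have hP' : P (N + 1) := by
      refine ⟨u, w.concat hadj, ht', ?_, by rw [SimpleGraph.Walk.length_concat, hlen]⟩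
      intro e he hew
      rw [SimpleGraph.Walk.edges_concat, List.concat_eq_append, List.mem_append] at hew
      rcases hew with h | h
      · exact havoid e he h
      · simp at h; subst h; exact hF he
    have := Nat.le_findGreatest (hbd _ hP') hP'
    omega
  -- the endpoint must be `r`, by a parity argument
  have hvr : v = r := by
    by_contra hvr
    have hodd : ¬ Even (w.edges.countP fun e => v ∈ e) := fun hev =>
      ((htw.even_countP_edges_iff v).1 hev (fun h => hvr h.symm)).2 rfl
    -- split the incidence finset at v into cycle edges and non-cycle edges
    have hsplit := Finset.card_filter_add_card_filter_not
      (s := G.incidenceFinset v) (p := fun e => e ∈ c.edges)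
    have hA : ((G.incidenceFinset v).filter (fun e => e ∈ c.edges)).card
        = c.edges.countP fun e => v ∈ e := by
      rw [List.countP_eq_length_filter, ← List.toFinset_card_of_nodup (hFnodup.filter _)]
      congr 1
      ext e
      simp only [Finset.mem_filter, SimpleGraph.mem_incidenceFinset,
        SimpleGraph.mk'_mem_incidenceSet_iff, List.mem_toFinset, List.mem_filter,
        decide_eq_true_eq]
      constructor
      · rintro ⟨hi, he⟩
        exact ⟨he, hi.2⟩
      · rintro ⟨he, hv⟩
        exact ⟨⟨hFe e he, hv⟩, he⟩
    have hB : ((G.incidenceFinset v).filter (fun e => ¬ e ∈ c.edges)).card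
        = w.edges.countP fun e => v ∈ e := by
      rw [List.countP_eq_length_filter,
        ← List.toFinset_card_of_nodup ((htw.edges_nodup).filter _)]
      congr 1
      ext e
      simp only [Finset.mem_filter, SimpleGraph.mem_incidenceFinset, List.mem_toFinset,
        List.mem_filter, decide_eq_true_eq]
      constructor
      · rintro ⟨hi, he⟩
        obtain ⟨hee, hv⟩ := hi
        refine ⟨?_, hv⟩
        induction e with
        | h x y =>
          rcases Sym2.mem_iff.mp hv with rfl | rfl
          · exact hmax y hee he
          · rw [Sym2.eq_swap]
            rw [Sym2.eq_swap] at he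
            exact hmax x hee.symm he
      · rintro ⟨he, hv⟩
        exact ⟨⟨w.edges_subset_edgeSet he, hv⟩, fun hF => havoid e hF he⟩
    rw [hA, hB, SimpleGraph.card_incidenceFinset_eq_degree] at hsplit
    have := heven v
    rw [← hsplit, Nat.even_add] at this
    exact hodd (this.1 (hFeven v))
  subst hvr
  refine ⟨v, w, htw, ?_, ?_⟩
  · intro u hadj
    refine hmax u hadj fun hF => ?_
    exact hFr _ hF (Sym2.mem_mk_left _ _)
  · obtain ⟨e, he⟩ := List.exists_mem_of_ne_nil _ hFne
    exact ⟨e, hFe e he, havoid e he⟩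
end
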